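/- There exist constants C > 0 and ψ₀ > 0 such that for all ψ ∈ (0, ψ₀), the solution θ' of sec ψ - 1 + tan ψ = tan(ψ + θ') with 0 < ψ + θ' < π/4 satisfies |θ' - ψ²/2| ≤ C·ψ³. -/

import Mathlib

set_option maxHeartbeats 2000000 in
theorem stmt_6 : ∃ C > (0:ℝ), ∃ ψ₀ > (0:ℝ), ∀ ψ : ℝ, ψ ∈ Set.Ioo 0 ψ₀ →
    ∀ θ' : ℝ, 0 < ψ + θ' → ψ + θ' < Real.pi / 4 →
      1 / Real.cos ψ - 1 + Real.tan ψ = Real.tan (ψ + θ') →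
      |θ' - ψ ^ 2 / 2| ≤ C * ψ ^ 3 := by
  refine ⟨3, by norm_num, 1/2, by norm_num, ?_⟩
  rintro ψ ⟨hψ0, hψ1⟩ θ' hf0 hf1 heq
  have hπ3 : (3:ℝ) < Real.pi := Real.pi_gt_three
  have hπ4 : Real.pi ≤ 4 := Real.pi_le_four
  have hcψ : 0 < Real.cos ψ :=
    Real.cos_pos_of_mem_Ioo ⟨by linarith, by linarith⟩
  have hcf : 0 < Real.cos (ψ + θ') :=
    Real.cos_pos_of_mem_Ioo ⟨by linarith, by linarith⟩
  -- Key identity: sin θ' = (1 - cos ψ) * cos (ψ + θ')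
  have hid : Real.sin θ' = (1 - Real.cos ψ) * Real.cos (ψ + θ') := by
    rw [Real.tan_eq_sin_div_cos, Real.tan_eq_sin_div_cos] at heq
    field_simp at heq
    have hsub := Real.sin_sub (ψ + θ') ψ
    rw [add_sub_cancel_left] at hsub
    rw [hsub]
    linear_combination -heq
  -- 1 - cos ψ bounds
  have hs2 : Real.cos ψ = 1 - 2 * Real.sin (ψ/2) ^ 2 := by
    have h1 := Real.cos_two_mul (ψ/2)
    have h2 := Real.sin_sq_add_cos_sq (ψ/2)
    have : (2:ℝ) * (ψ/2) = ψ := by ring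
    rw [this] at h1
    linarith
  have hs2le : Real.sin (ψ/2) ≤ ψ/2 := Real.sin_le (by linarith)
  have hs2gt : ψ/2 - (ψ/2)^3/4 < Real.sin (ψ/2) :=
    by have h := Real.sin_gt_sub_cube (by linarith : (0:ℝ) < ψ/2); have : 0 ≤ (ψ/2)^3 := (by positivity); linarith
  have hs2pos : 0 < Real.sin (ψ/2) := by
    have hψ2 : ψ^2 < 1 := by nlinarith
    have h : (ψ/2)^3/4 < ψ/2 := by nlinarith [mul_pos hψ0 hψ0]
    linarith
  have hub : 1 - Real.cos ψ ≤ ψ^2/2 := by nlinarith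
  have hlb : ψ^2/2 - ψ^4/8 ≤ 1 - Real.cos ψ := by nlinarith
  have hpos : 0 < 1 - Real.cos ψ := by nlinarith
  -- θ' > 0
  have hsinpos : 0 < Real.sin θ' := by
    rw [hid]; exact mul_pos hpos hcf
  have hθpos : 0 < θ' := by
    by_contra h
    push_neg at h
    have : Real.sin θ' ≤ 0 :=
      Real.sin_nonpos_of_nonpos_of_neg_pi_le h (by linarith)
    linarith
  -- sin θ' ≤ ψ²/2
  have hsinle : Real.sin θ' ≤ ψ^2/2 := by
    rw [hid]
    calc (1 - Real.cos ψ) * Real.cos (ψ + θ') ≤ (1 - Real.cos ψ) * 1 :=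
          mul_le_mul_of_nonneg_left (Real.cos_le_one _) (le_of_lt hpos)
      _ ≤ ψ^2/2 := by linarith
  -- θ' ≤ ψ²
  have hθle : θ' ≤ ψ^2 := by
    have h := Real.mul_le_sin (le_of_lt hθpos) (by linarith)
    have hπpos : 0 < Real.pi := by linarith
    rw [div_mul_eq_mul_div, div_le_iff₀ hπpos] at h
    nlinarith [mul_le_mul_of_nonneg_right hsinle (le_of_lt hπpos)]
  have hψsq : ψ^2 ≤ ψ := by
    rw [pow_two]
    exact mul_le_of_le_one_right (le_of_lt hψ0) (by linarith)
  -- θ' - sin θ' small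
  have hθ1 : θ' ≤ 1 := by nlinarith [hθle]
  have ha1 : Real.sin θ' ≤ θ' := Real.sin_le (le_of_lt hθpos)
  have ha2 : θ' - θ'^3/4 < Real.sin θ' := by have h := Real.sin_gt_sub_cube hθpos; have : 0 ≤ θ'^3 := (by positivity); linarith
  -- cos (ψ + θ') close to 1
  have hb1 : Real.cos (ψ + θ') ≤ 1 := Real.cos_le_one _
  have hb2 : 1 - (ψ + θ')^2/2 ≤ Real.cos (ψ + θ') :=
    Real.one_sub_sq_div_two_le_cos
  have hsum : ψ + θ' ≤ 2*ψ := by linarith [hθle, hψsq]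
  -- |sin θ' - (1 - cos ψ)| ≤ ψ⁴
  have hc1 : Real.sin θ' - (1 - Real.cos ψ) ≤ 0 := by
    rw [hid]
    have h := mul_le_mul_of_nonneg_left hb1 (le_of_lt hpos)
    linarith
  have hc2 : (1 - Real.cos ψ) - Real.sin θ' ≤ ψ^4 := by
    rw [hid]
    have : (1 - Real.cos ψ) * (1 - Real.cos (ψ + θ')) ≤ (ψ^2/2) * ((ψ+θ')^2/2) := by
      apply mul_le_mul hub (by linarith) (by linarith) (by positivity)
    have h4 : (ψ+θ')^2 ≤ (2*ψ)^2 := pow_le_pow_left₀ (le_of_lt hf0) hsum 2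
    have key : ψ^2/2 * ((ψ+θ')^2/2) ≤ ψ^4 := by
      have h5 := mul_le_mul_of_nonneg_left h4 (by positivity : (0:ℝ) ≤ ψ^2/4)
      calc ψ^2/2 * ((ψ+θ')^2/2) = ψ^2/4 * (ψ+θ')^2 := by ring
        _ ≤ ψ^2/4 * (2*ψ)^2 := h5
        _ = ψ^4 := by ring
    linarith [this, key]
  have hθψ : θ' ≤ ψ := le_trans hθle hψsq
  have hθ3 : θ'^3 ≤ ψ^3 := pow_le_pow_left₀ (le_of_lt hθpos) hθψ 3
  have hψ43 : ψ^4 ≤ ψ^3 := by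
    calc ψ^4 = ψ^3 * ψ := by ring
      _ ≤ ψ^3 * 1 := by
          apply mul_le_mul_of_nonneg_left (by linarith) (by positivity)
      _ = ψ^3 := by ring
  have hψ3 : 0 ≤ ψ^3 := by positivity
  rw [abs_le]
  constructor
  · linarith
  · linarith
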